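/- Let f(x) = x² - x - 3, ρ(x) = x/(2x - 1) and h(x) = 3 - x. For every real x > -13/4, if y₁ and y₂ are the two real solutions of f(y) = x, then ρ(y₁)h(y₁) + ρ(y₂)h(y₂) = 2. -/

import Mathlib

/-- For `f y = y^2 - y - 3`, `ρ y = y / (2y - 1)`, `h y = 3 - y`: if `x > -13/4`
and `y₁, y₂` are the two real solutions of `f y = x`, then
`ρ y₁ * h y₁ + ρ y₂ * h y₂ = 2`. -/
theorem rho_h_sum_eq_two (x y₁ y₂ : ℝ)
    (hx : -13/4 < x)
    (h1 : y₁ ^ 2 - y₁ - 3 = x) (h2 : y₂ ^ 2 - y₂ - 3 = x) (hne : y₁ ≠ y₂) :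
    (y₁ / (2 * y₁ - 1)) * (3 - y₁) + (y₂ / (2 * y₂ - 1)) * (3 - y₂) = 2 := by
  have hsum : y₁ + y₂ = 1 := by
    have h : (y₁ - y₂) * (y₁ + y₂ - 1) = 0 := by linear_combination h1 - h2
    have := sub_ne_zero.mpr hne
    have := mul_eq_zero.mp h
    rcases this with h' | h'
    · exact absurd h' ‹y₁ - y₂ ≠ 0›
    · linarith [sub_eq_zero.mp h']
  have hd1 : 2 * y₁ - 1 ≠ 0 := by
    intro h
    have : y₁ = 1/2 := by linarith
    rw [this] at h1; nlinarith
  have hd2 : 2 * y₂ - 1 ≠ 0 := by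
    intro h
    have : y₂ = 1/2 := by linarith
    rw [this] at h2; nlinarith
  rw [div_mul_eq_mul_div, div_mul_eq_mul_div, div_add_div _ _ hd1 hd2, div_eq_iff (mul_ne_zero hd1 hd2)]
  nlinarith [h1, h2, hsum, sq_nonneg (y₁ - y₂), sq_nonneg (y₁ + y₂)]
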